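/- If a Borel set S in a complete metric linear space V admits a transverse measure, then it admits a transverse measure that is finite, has compact support, and whose support has diameter less than any prescribed ε > 0. -/

import Mathlib

open MeasureTheory Metric Set

variable {V : Type*} [AddCommGroup V] [Module ℝ V] [MetricSpace V] [CompleteSpace V]
  [IsTopologicalAddGroup V] [ContinuousSMul ℝ V] [MeasurableSpace V] [BorelSpace V]

/-- A measure `μ` (nonnegative Borel, not identically zero) is transverse to a Borel
set `S`: it is positive and finite on some compact set and annihilates every
translate of `S`. -/
def Transverse (μ : Measure V) (S : Set V) : Prop :=
  (∃ U : Set V, IsCompact U ∧ 0 < μ U ∧ μ U < ⊤) ∧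
  ∀ v : V, μ ((fun x => x + v) '' S) = 0

/-- If a Borel set `S` in a complete metric linear space admits a transverse measure,
then for every `ε > 0` it admits a transverse measure which is finite, has compact
support, and whose support has diameter less than `ε`. -/
theorem stmt_2 (S : Set V) (hS : MeasurableSet S)
    (h : ∃ μ : Measure V, Transverse μ S) (ε : ℝ) (hε : 0 < ε) :
    ∃ ν : Measure V, Transverse ν S ∧ IsFiniteMeasure ν ∧
      ∃ K : Set V, IsCompact K ∧ ν Kᶜ = 0 ∧ EMetric.diam K < ENNReal.ofReal ε := by
  obtain ⟨μ, ⟨⟨U, hU, hUpos, hUfin⟩, htr⟩⟩ := h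
  have hr : (0:ℝ) < ε / 5 := by linarith
  -- cover U by finitely many balls of radius ε/5
  obtain ⟨t, -, htfin, hcov⟩ := hU.finite_cover_balls hr
  -- one ball has positive measure
  have : ∃ x ∈ t, 0 < μ (U ∩ closedBall x (ε/5)) := by
    by_contra hcon
    push_neg at hcon
    have h0 : μ (⋃ x ∈ t, U ∩ closedBall x (ε/5)) = 0 := by
      refine (measure_biUnion_null_iff htfin.countable).2 fun x hx => ?_
      exact le_antisymm (hcon x hx) bot_le
    have hsub : U ⊆ ⋃ x ∈ t, U ∩ closedBall x (ε/5) := by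
      intro y hy
      obtain ⟨x, hx, hyx⟩ := mem_iUnion₂.1 (hcov hy)
      exact mem_iUnion₂.2 ⟨x, hx, hy, ball_subset_closedBall hyx⟩
    exact absurd (le_antisymm ((measure_mono hsub).trans h0.le) bot_le)
      hUpos.ne'
  obtain ⟨x, -, hxpos⟩ := this
  set K := U ∩ closedBall x (ε/5) with hK
  have hKcompact : IsCompact K := hU.inter_right isClosed_closedBall
  have hKmeas : MeasurableSet K := hKcompact.isClosed.measurableSet
  refine ⟨μ.restrict K, ⟨⟨K, hKcompact, ?_, ?_⟩, fun v => ?_⟩, ?_, K, hKcompact, ?_, ?_⟩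
  · rwa [Measure.restrict_apply_self]
  · rw [Measure.restrict_apply_self]
    exact lt_of_le_of_lt (measure_mono inter_subset_left) hUfin
  · exact le_antisymm ((Measure.restrict_le_self _).trans_eq (htr v)) bot_le
  · refine ⟨?_⟩
    rw [Measure.restrict_apply_univ]
    exact lt_of_le_of_lt (measure_mono inter_subset_left) hUfin
  · rw [Measure.restrict_apply hKmeas.compl]
    simp
  · calc EMetric.diam K ≤ EMetric.diam (closedBall x (ε/5)) :=
          EMetric.diam_mono inter_subset_right
      _ ≤ 2 * ENNReal.ofReal (ε/5) := by
          rw [← Metric.emetric_closedBall hr.le]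
          exact EMetric.diam_closedBall
      _ < ENNReal.ofReal ε := by
          rw [← ENNReal.ofReal_ofNat 2, ← ENNReal.ofReal_mul (by norm_num)]
          apply ENNReal.ofReal_lt_ofReal_iff hε |>.2
          linarith
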